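/- Let R > 0, let u, v : ℂ → ℂ be complex-differentiable and nonvanishing on the open ball {z : |z| < R}, and let a, b ∈ ℤ. Define F(z) := z^a·u(z) and G(z) := z^b·v(z) for z ≠ 0. Fix 0 < r < R and set f(t) := F(r·exp(i·t)), g(t) := G(r·exp(i·t)); let L : ℝ → ℂ be a branch of log f on [0,2π] and let m ∈ ℤ satisfy ∫₀^{2π} f'(t)/f(t) dt = 2πi·m. Then m = a and exp((1/(2πi)) ∫₀^{2π} L(t)·g'(t)/g(t) dt) · g(0)^{−m} = (−1)^{a·b} · u(0)^{b} · v(0)^{−a}; that is, the Deligne–Beilinson pairing of F and G along a small counterclockwise circle around 0 equals the tame symbol (F,G)₀ = (−1)^{ν₀(F)ν₀(G)}·[F^{ν₀(G)}/G^{ν₀(F)}](0) of F and G at the point 0. -/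

import Mathlib

open Complex Metric intervalIntegral
open scoped Real NNReal ENNReal

/-- Parity/IVT helper: a continuous real function on an interval taking only values
in `2πℤ` cannot take two distinct such values. -/
lemma db_no_half {x y : ℝ} {ρ : ℝ → ℝ} (hρ : ContinuousOn ρ (Set.uIcc x y))
    {n k : ℤ} (hnk : n < k) (hx : ρ x = 2 * π * n) (hy : ρ y = 2 * π * k)
    (hint : ∀ s ∈ Set.uIcc x y, ∃ j : ℤ, ρ s = 2 * π * j) : False := by
  have hπ := Real.pi_pos
  have hnk' : (n : ℝ) + 1 ≤ k := by exact_mod_cast hnk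
  have hmem : (2 * π * n + π) ∈ Set.uIcc (ρ x) (ρ y) := by
    rw [hx, hy, Set.uIcc_of_le (by nlinarith)]
    constructor
    · nlinarith
    · nlinarith
  obtain ⟨s, hs, hρs⟩ := intermediate_value_uIcc hρ hmem
  obtain ⟨j, hj⟩ := hint s hs
  rw [hj] at hρs
  have h1 : (2 * (j : ℝ) - 2 * n - 1) * π = 0 := by linear_combination hρs
  have h2 : (2 * (j : ℝ) - 2 * n - 1) = 0 :=
    (mul_eq_zero.mp h1).resolve_right Real.pi_ne_zero
  have h3 : 2 * j = 2 * n + 1 := by exact_mod_cast (by linarith : (2 * j : ℝ) = 2 * n + 1)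
  omega

/-- Two continuous logarithms of the same function on `[0, 2π]` differ by a constant
integer multiple of `2πi`. -/
lemma db_branch_eq {L Φ : ℝ → ℂ} (hL : Continuous L) (hΦ : Continuous Φ)
    (h : ∀ t ∈ Set.Icc (0:ℝ) (2 * π), Complex.exp (L t) = Complex.exp (Φ t)) :
    ∃ n : ℤ, ∀ t ∈ Set.Icc (0:ℝ) (2 * π), L t = Φ t + n * (2 * π * Complex.I) := by
  have hπ := Real.pi_pos
  have hint : ∀ t ∈ Set.Icc (0:ℝ) (2 * π), ∃ j : ℤ,
      L t - Φ t = j * (2 * π * Complex.I) := by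
    intro t ht
    have h1 : Complex.exp (L t - Φ t) = 1 := by
      rw [Complex.exp_sub, h t ht, div_self (Complex.exp_ne_zero _)]
    exact Complex.exp_eq_one_iff.mp h1
  have h0mem : (0:ℝ) ∈ Set.Icc (0:ℝ) (2 * π) := ⟨le_refl _, by positivity⟩
  obtain ⟨n, hn⟩ := hint 0 h0mem
  refine ⟨n, fun t ht => ?_⟩
  obtain ⟨k, hk⟩ := hint t ht
  have himval : ∀ j : ℤ, ((j : ℂ) * (2 * π * Complex.I)).im = 2 * π * j := by
    intro j
    simp [Complex.mul_im]
    ring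
  -- the imaginary part of L - Φ
  set ρ : ℝ → ℝ := fun s => (L s - Φ s).im with hρdef
  have hρc : Continuous ρ := Complex.continuous_im.comp (hL.sub hΦ)
  have hsubmem : Set.uIcc (0:ℝ) t ⊆ Set.Icc (0:ℝ) (2 * π) := by
    rw [Set.uIcc_of_le ht.1]
    exact Set.Icc_subset_Icc le_rfl ht.2
  have hρint : ∀ s ∈ Set.uIcc (0:ℝ) t, ∃ j : ℤ, ρ s = 2 * π * j := by
    intro s hs
    obtain ⟨j, hj⟩ := hint s (hsubmem hs)
    exact ⟨j, by rw [hρdef]; simp only []; rw [hj, himval]⟩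
  have hρ0 : ρ 0 = 2 * π * n := by rw [hρdef]; simp only []; rw [hn, himval]
  have hρt : ρ t = 2 * π * k := by rw [hρdef]; simp only []; rw [hk, himval]
  have hkn : k = n := by
    by_contra hne
    rcases lt_or_gt_of_ne hne with hlt | hgt
    · exact db_no_half (x := t) (y := 0) (hρc.continuousOn) hlt hρt hρ0
        (fun s hs => hρint s (by rwa [Set.uIcc_comm] at hs))
    · exact db_no_half (x := 0) (y := t) (hρc.continuousOn) hgt hρ0 hρt hρint
  rw [hkn] at hk
  linear_combination hk

/-- Existence of a holomorphic logarithm (with its derivative) of a nonvanishing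
holomorphic function on a slightly smaller ball. -/
lemma db_exists_log {R r₁ : ℝ} (hr₁ : 0 < r₁) (hr₁R : r₁ < R)
    {φ : ℂ → ℂ} (hφ : DifferentiableOn ℂ φ (Metric.ball 0 R))
    (hne : ∀ z ∈ Metric.ball (0:ℂ) R, φ z ≠ 0) :
    ∃ ℓ : ℂ → ℂ, (∀ z ∈ Metric.ball (0:ℂ) r₁, HasDerivAt ℓ (deriv φ z / φ z) z)
      ∧ ∀ z ∈ Metric.ball (0:ℂ) r₁, Complex.exp (ℓ z) = φ z := by
  have hR : 0 < R := hr₁.trans hr₁R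
  set A : ℂ → ℂ := fun z => deriv φ z / φ z with hAdef
  have hdφ : DifferentiableOn ℂ (deriv φ) (Metric.ball 0 R) :=
    ((hφ.analyticOnNhd isOpen_ball).deriv).differentiableOn
  have hA : DifferentiableOn ℂ A (Metric.ball 0 R) := hdφ.div hφ hne
  -- power series for A on a ball of radius r₂, with r₁ < r₂ < R
  set r₂ : ℝ := (r₁ + R) / 2 with hr₂def
  have hr₁r₂ : r₁ < r₂ := by rw [hr₂def]; linarith
  have hr₂R : r₂ < R := by rw [hr₂def]; linarith
  have hr₂0 : 0 < r₂ := hr₁.trans hr₁r₂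
  have hr₂coe : ((r₂.toNNReal : ℝ≥0) : ℝ) = r₂ := Real.coe_toNNReal _ hr₂0.le
  have hAcb : DifferentiableOn ℂ A (closedBall 0 (r₂.toNNReal : ℝ)) := by
    rw [hr₂coe]; exact hA.mono (closedBall_subset_ball hr₂R)
  have hp := hAcb.hasFPowerSeriesOnBall (by simpa [Real.toNNReal_pos] using hr₂0)
  set p := cauchyPowerSeries A 0 r₂.toNNReal with hpdef
  -- coefficient bound at radius ρr with r₁ < ρr < r₂
  set ρr : ℝ := (r₁ + r₂) / 2 with hρrdef
  have hρr0 : 0 < ρr := by rw [hρrdef]; linarith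
  have hr₁ρr : r₁ < ρr := by rw [hρrdef]; linarith
  have hρrr₂ : ρr < r₂ := by rw [hρrdef]; linarith
  have hρrcoe : ((ρr.toNNReal : ℝ≥0) : ℝ) = ρr := Real.coe_toNNReal _ hρr0.le
  clear_value r₂ ρr
  have hρlt : (ρr.toNNReal : ℝ≥0∞) < p.radius := by
    refine lt_of_lt_of_le ?_ hp.r_le
    rw [ENNReal.coe_lt_coe, ← NNReal.coe_lt_coe, hρrcoe, hr₂coe]
    exact hρrr₂
  obtain ⟨Cb, hCb, hbound⟩ := p.norm_mul_pow_le_of_lt_radius hρlt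
  have hcoeff : ∀ n, ‖p.coeff n‖ * ρr ^ n ≤ Cb := by
    intro n
    have := hbound n
    rwa [p.norm_apply_eq_norm_coef, hρrcoe] at this
  -- the antiderivative series
  set g : ℕ → ℂ → ℂ := fun n z => p.coeff n / ((n : ℂ) + 1) * z ^ (n + 1) with hgdef
  set g' : ℕ → ℂ → ℂ := fun n z => p.coeff n * z ^ n with hg'def
  set ub : ℕ → ℝ := fun n => Cb * (r₁ / ρr) ^ n with hubdef
  have hub : Summable ub := by
    apply Summable.mul_left
    exact summable_geometric_of_lt_one (by positivity) ((div_lt_one hρr0).mpr hr₁ρr)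
  have hg : ∀ (n : ℕ) (z : ℂ), HasDerivAt (g n) (g' n z) z := by
    intro n z
    have h1 := (hasDerivAt_pow (n + 1) z).const_mul (p.coeff n / ((n : ℂ) + 1))
    have hne1 : ((n : ℂ) + 1) ≠ 0 := Nat.cast_add_one_ne_zero n
    refine h1.congr_deriv ?_
    simp only [Nat.add_sub_cancel, Nat.cast_add, Nat.cast_one]
    field_simp
    ring
  have hg' : ∀ (n : ℕ) (z : ℂ), z ∈ Metric.ball (0:ℂ) r₁ → ‖g' n z‖ ≤ ub n := by
    intro n z hz
    rw [mem_ball_zero_iff] at hz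
    have h1 : ‖p.coeff n‖ ≤ Cb / ρr ^ n :=
      (le_div_iff₀ (pow_pos hρr0 n)).mpr (hcoeff n)
    calc ‖p.coeff n * z ^ n‖ = ‖p.coeff n‖ * ‖z‖ ^ n := by rw [norm_mul, norm_pow]
      _ ≤ (Cb / ρr ^ n) * r₁ ^ n := by
          apply mul_le_mul h1 (pow_le_pow_left₀ (norm_nonneg z) hz.le n)
            (pow_nonneg (norm_nonneg z) n)
            (div_nonneg hCb.le (pow_nonneg hρr0.le n))
      _ = Cb * (r₁ / ρr) ^ n := by rw [div_pow]; ring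
  have hg0 : Summable fun n => g n 0 := by
    have : (fun n => g n 0) = fun _ => (0:ℂ) := by
      funext n; simp [hgdef]
    rw [this]; exact summable_zero
  set P : ℂ → ℂ := fun z => ∑' n, g n z with hPdef
  have hPderiv : ∀ z ∈ Metric.ball (0:ℂ) r₁, HasDerivAt P (∑' n, g' n z) z := by
    intro z hz
    exact hasDerivAt_tsum_of_isPreconnected hub isOpen_ball
      (convex_ball (0:ℂ) r₁).isPreconnected (fun n y _ => hg n y) hg'
      (mem_ball_self hr₁) hg0 hz
  have hsum : ∀ z ∈ Metric.ball (0:ℂ) r₁, (∑' n, g' n z) = A z := by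
    intro z hz
    have hz2 : z ∈ Metric.eball (0:ℂ) (r₂.toNNReal : ℝ≥0∞) := by
      rw [Metric.emetric_ball_nnreal, hr₂coe]
      exact ball_subset_ball hr₁r₂.le hz
    have hs := hp.hasSum hz2
    rw [zero_add] at hs
    have heq : (fun n => p n fun _ => z) = fun n => g' n z := by
      funext n
      rw [p.apply_eq_pow_smul_coeff, smul_eq_mul, hg'def]
      ring
    rw [heq] at hs
    exact hs.tsum_eq
  have hPd : ∀ z ∈ Metric.ball (0:ℂ) r₁, HasDerivAt P (A z) z := by
    intro z hz
    have := hPderiv z hz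
    rwa [hsum z hz] at this
  have hP0 : P 0 = 0 := by
    rw [hPdef]
    have : (fun n => g n 0) = fun _ => (0:ℂ) := by funext n; simp [hgdef]
    simp only [this, tsum_zero]
  have hφ0 : φ 0 ≠ 0 := hne 0 (mem_ball_self hR)
  -- φ z * exp (-P z) is constant on the ball
  set q : ℂ → ℂ := fun z => φ z * Complex.exp (-P z) with hqdef
  have hqd : ∀ z ∈ Metric.ball (0:ℂ) r₁, HasDerivAt q 0 z := by
    intro z hz
    have hzR : z ∈ Metric.ball (0:ℂ) R := ball_subset_ball hr₁R.le hz
    have h1 : HasDerivAt φ (deriv φ z) z :=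
      (hφ.differentiableAt (isOpen_ball.mem_nhds hzR)).hasDerivAt
    have h2 : HasDerivAt (fun y => Complex.exp (-P y))
        (Complex.exp (-P z) * -A z) z := ((hPd z hz).neg).cexp
    have h3 := h1.mul h2
    refine h3.congr_deriv ?_
    rw [hAdef]
    field_simp [hne z hzR]
    ring
  have hqdiff : DifferentiableOn ℂ q (Metric.ball (0:ℂ) r₁) :=
    fun z hz => ((hqd z hz).differentiableAt).differentiableWithinAt
  have hqf : ∀ x ∈ Metric.ball (0:ℂ) r₁,
      fderivWithin ℂ q (Metric.ball (0:ℂ) r₁) x = 0 := by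
    intro x hx
    rw [fderivWithin_of_isOpen isOpen_ball hx, (hqd x hx).hasFDerivAt.fderiv]
    ext1
    simp
  have hconst : ∀ z ∈ Metric.ball (0:ℂ) r₁, q z = q 0 := fun z hz =>
    (convex_ball (0:ℂ) r₁).is_const_of_fderivWithin_eq_zero hqdiff hqf hz
      (mem_ball_self hr₁)
  refine ⟨fun z => P z + Complex.log (φ 0), fun z hz => (hPd z hz).add_const _, ?_⟩
  intro z hz
  have h2 := hconst z hz
  rw [hqdef] at h2
  simp only [hP0, neg_zero, Complex.exp_zero, mul_one] at h2
  rw [Complex.exp_add, Complex.exp_log hφ0, ← h2]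
  rw [Complex.exp_neg]
  field_simp

/-- Mean value property over a circle, for the parametrization `r·exp(i t)`. -/
lemma db_circle_avg {r r₁ : ℝ} (hr : 0 < r) (hrr₁ : r < r₁) {ψ : ℂ → ℂ}
    (hψ : DifferentiableOn ℂ ψ (Metric.ball 0 r₁)) :
    ∫ t in (0:ℝ)..(2 * π), ψ ((r:ℂ) * Complex.exp (Complex.I * t))
      = 2 * π * ψ 0 := by
  have h := DifferentiableOn.circleIntegral_sub_inv_smul
    (hψ.mono (closedBall_subset_ball hrr₁)) (mem_ball_self hr)
  rw [circleIntegral] at h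
  simp only [deriv_circleMap, sub_zero, smul_eq_mul] at h
  have hcm : ∀ θ : ℝ, circleMap 0 r θ = (r:ℂ) * Complex.exp (Complex.I * θ) := by
    intro θ
    simp [circleMap, mul_comm]
  have hne : ∀ θ : ℝ, ((r:ℂ) * Complex.exp (Complex.I * θ)) ≠ 0 :=
    fun θ => mul_ne_zero (Complex.ofReal_ne_zero.mpr hr.ne') (Complex.exp_ne_zero _)
  have h2 : ∫ θ in (0:ℝ)..(2 * π),
      Complex.I * ψ ((r:ℂ) * Complex.exp (Complex.I * θ))
      = 2 * π * Complex.I * ψ 0 := by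
    rw [← h]
    apply intervalIntegral.integral_congr
    intro θ _
    simp only [hcm θ]
    field_simp [hne θ, Complex.ofReal_ne_zero.mpr hr.ne']
  rw [intervalIntegral.integral_const_mul] at h2
  apply mul_left_cancel₀ Complex.I_ne_zero
  rw [h2]
  ring

/-- Cauchy–Goursat over a circle, for the parametrization `r·exp(i t)`. -/
lemma db_circle_zero {r r₁ : ℝ} (hr : 0 < r) (hrr₁ : r < r₁) {ψ : ℂ → ℂ}
    (hψ : DifferentiableOn ℂ ψ (Metric.ball 0 r₁)) :
    ∫ t in (0:ℝ)..(2 * π), ψ ((r:ℂ) * Complex.exp (Complex.I * t))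
        * (Complex.I * ((r:ℂ) * Complex.exp (Complex.I * t))) = 0 := by
  have hc : ContinuousOn ψ (closedBall 0 r) :=
    hψ.continuousOn.mono (closedBall_subset_ball hrr₁)
  have hd : ∀ z ∈ Metric.ball (0:ℂ) r \ (∅ : Set ℂ), DifferentiableAt ℂ ψ z :=
    fun z hz => hψ.differentiableAt
      (isOpen_ball.mem_nhds (ball_subset_ball hrr₁.le hz.1))
  have h := Complex.circleIntegral_eq_zero_of_differentiable_on_off_countable
    hr.le Set.countable_empty hc hd
  rw [circleIntegral] at h
  simp only [deriv_circleMap, smul_eq_mul] at h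
  have hcm : ∀ θ : ℝ, circleMap 0 r θ = (r:ℂ) * Complex.exp (Complex.I * θ) := by
    intro θ
    simp [circleMap, mul_comm]
  rw [← h]
  apply intervalIntegral.integral_congr
  intro θ _
  simp only [hcm θ]
  ring

/-- **The Deligne–Beilinson pairing along a small circle around `0` equals the tame
symbol:** for `F(z) = z^a·u(z)` and `G(z) = z^b·v(z)` with `u`, `v` holomorphic and
nonvanishing on `{|z| < R}`, the winding number of `f(t) = F(r·exp(it))` is `a` and
`T(f, g) = (−1)^{ab}·u(0)^b·v(0)^{−a}`. -/
theorem pairing_equals_tame_symbol (R : ℝ) (hR : 0 < R)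
    (u v : ℂ → ℂ)
    (hu : DifferentiableOn ℂ u (Metric.ball 0 R))
    (hv : DifferentiableOn ℂ v (Metric.ball 0 R))
    (hune : ∀ z ∈ Metric.ball (0:ℂ) R, u z ≠ 0)
    (hvne : ∀ z ∈ Metric.ball (0:ℂ) R, v z ≠ 0)
    (a b : ℤ) (F G : ℂ → ℂ)
    (hF : ∀ z : ℂ, z ≠ 0 → F z = z ^ a * u z)
    (hG : ∀ z : ℂ, z ≠ 0 → G z = z ^ b * v z)
    (r : ℝ) (hr0 : 0 < r) (hrR : r < R)
    (f g : ℝ → ℂ)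
    (hfdef : ∀ t : ℝ, f t = F (r * Complex.exp (Complex.I * t)))
    (hgdef : ∀ t : ℝ, g t = G (r * Complex.exp (Complex.I * t)))
    (L : ℝ → ℂ) (hLc : Continuous L)
    (hL : ∀ t ∈ Set.Icc (0:ℝ) (2 * Real.pi), Complex.exp (L t) = f t)
    (m : ℤ)
    (hm : ∫ t in (0:ℝ)..(2 * Real.pi), deriv f t / f t
      = 2 * (Real.pi : ℂ) * Complex.I * (m : ℂ)) :
    m = a
    ∧ Complex.exp ((1 / (2 * (Real.pi : ℂ) * Complex.I)) *
          ∫ t in (0:ℝ)..(2 * Real.pi), L t * (deriv g t / g t)) * g 0 ^ (-m)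
      = (-1 : ℂ) ^ (a * b) * u 0 ^ b * v 0 ^ (-a) := by
  have hπ := Real.pi_pos
  set r₁ : ℝ := (r + R) / 2 with hr₁def
  have hr₁0 : 0 < r₁ := by rw [hr₁def]; linarith
  have hrr₁ : r < r₁ := by rw [hr₁def]; linarith
  have hr₁R : r₁ < R := by rw [hr₁def]; linarith
  clear_value r₁
  obtain ⟨Lu, hLud, hLue⟩ := db_exists_log hr₁0 hr₁R hu hune
  obtain ⟨Lv, hLvd, hLve⟩ := db_exists_log hr₁0 hr₁R hv hvne
  set Au : ℂ → ℂ := fun z => deriv u z / u z with hAudef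
  set Av : ℂ → ℂ := fun z => deriv v z / v z with hAvdef
  set w : ℝ → ℂ := fun t => (r:ℂ) * Complex.exp (Complex.I * t) with hwdef
  -- basic facts about w
  have hwnorm : ∀ t : ℝ, ‖w t‖ = r := by
    intro t
    rw [hwdef]
    simp only [norm_mul, Complex.norm_real, Complex.norm_exp]
    simp [abs_of_pos hr0]
  have hwb : ∀ t : ℝ, w t ∈ Metric.ball (0:ℂ) r₁ := by
    intro t; rw [mem_ball_zero_iff, hwnorm t]; exact hrr₁
  have hwbR : ∀ t : ℝ, w t ∈ Metric.ball (0:ℂ) R := by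
    intro t; rw [mem_ball_zero_iff, hwnorm t]; exact hrR
  have hwne : ∀ t : ℝ, w t ≠ 0 := by
    intro t h
    have := hwnorm t
    rw [h, norm_zero] at this
    exact hr0.ne this
  have hwcont : Continuous w := by
    rw [hwdef]
    exact continuous_const.mul ((continuous_const.mul Complex.continuous_ofReal).cexp)
  have hT : ∀ t : ℝ, HasDerivAt (fun s : ℝ => (s:ℂ)) 1 t := by
    intro t
    simpa using (hasDerivAt_id t).ofReal_comp (z := t)
  have hwd : ∀ t : ℝ, HasDerivAt w (Complex.I * w t) t := by
    intro t
    have h1 : HasDerivAt (fun s : ℝ => Complex.I * (s:ℂ)) Complex.I t := by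
      simpa using (hT t).const_mul Complex.I
    have h2 := h1.cexp
    have h3 := h2.const_mul (r:ℂ)
    rw [hwdef]
    refine h3.congr_deriv ?_
    beta_reduce
    ring
  have hw2π : w (2 * π) = w 0 := by
    rw [hwdef]
    simp only []
    congr 1
    rw [show (Complex.I * ((2 * π : ℝ) : ℂ)) = 2 * (π:ℂ) * Complex.I by push_cast; ring,
      Complex.exp_two_pi_mul_I]
    simp
  -- derivatives of h := Lu ∘ w and k := Lv ∘ w
  have hhd : ∀ t : ℝ, HasDerivAt (fun s => Lu (w s)) (Au (w t) * (Complex.I * w t)) t := by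
    intro t
    have := (hLud (w t) (hwb t)).comp t (hwd t)
    exact this
  have hkd : ∀ t : ℝ, HasDerivAt (fun s => Lv (w s)) (Av (w t) * (Complex.I * w t)) t := by
    intro t
    have := (hLvd (w t) (hwb t)).comp t (hwd t)
    exact this
  -- continuity facts
  have hLuwc : Continuous (fun t : ℝ => Lu (w t)) :=
    continuous_iff_continuousAt.mpr fun t =>
      ((hLud _ (hwb t)).differentiableAt.continuousAt).comp hwcont.continuousAt
  have hLvwc : Continuous (fun t : ℝ => Lv (w t)) :=
    continuous_iff_continuousAt.mpr fun t =>
      ((hLvd _ (hwb t)).differentiableAt.continuousAt).comp hwcont.continuousAt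
  have hAu : DifferentiableOn ℂ Au (Metric.ball 0 R) :=
    (((hu.analyticOnNhd isOpen_ball).deriv).differentiableOn).div hu hune
  have hAv : DifferentiableOn ℂ Av (Metric.ball 0 R) :=
    (((hv.analyticOnNhd isOpen_ball).deriv).differentiableOn).div hv hvne
  have hAuwc : Continuous (fun t : ℝ => Au (w t)) :=
    hAu.continuousOn.comp_continuous hwcont hwbR
  have hAvwc : Continuous (fun t : ℝ => Av (w t)) :=
    hAv.continuousOn.comp_continuous hwcont hwbR
  set lr : ℂ := Complex.log r with hlrdef
  have hrne : ((r:ℂ)) ≠ 0 := Complex.ofReal_ne_zero.mpr hr0.ne'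
  -- w t ^ a as an exponential
  have hwexp : ∀ t : ℝ, w t = Complex.exp (lr + Complex.I * t) := by
    intro t
    rw [Complex.exp_add, hlrdef, Complex.exp_log hrne, hwdef]
  have hwzpow : ∀ (c : ℤ) (t : ℝ), w t ^ c
      = Complex.exp ((c:ℂ) * (lr + Complex.I * t)) := by
    intro c t
    rw [hwexp t, Complex.exp_int_mul]
  -- Φ and Ψ
  set Φ : ℝ → ℂ := fun t => (a:ℂ) * lr + Complex.I * a * t + Lu (w t) with hΦdef
  set Ψ : ℝ → ℂ := fun t => (b:ℂ) * lr + Complex.I * b * t + Lv (w t) with hΨdef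
  have hfΦ : ∀ t : ℝ, f t = Complex.exp (Φ t) := by
    intro t
    rw [hfdef t, hF _ (hwne t)]
    show w t ^ a * u (w t) = _
    rw [← hLue _ (hwb t), hwzpow a t, hΦdef, ← Complex.exp_add]
    congr 1
    ring
  have hgΨ : ∀ t : ℝ, g t = Complex.exp (Ψ t) := by
    intro t
    rw [hgdef t, hG _ (hwne t)]
    show w t ^ b * v (w t) = _
    rw [← hLve _ (hwb t), hwzpow b t, hΨdef, ← Complex.exp_add]
    congr 1
    ring
  have hΦd : ∀ t : ℝ, HasDerivAt Φ
      (Complex.I * a + Au (w t) * (Complex.I * w t)) t := by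
    intro t
    have h1 : HasDerivAt (fun s : ℝ => Complex.I * (a:ℂ) * (s:ℂ)) (Complex.I * a) t := by
      simpa using (hT t).const_mul (Complex.I * (a:ℂ))
    have h2 := ((hasDerivAt_const t ((a:ℂ) * lr)).add h1).add (hhd t)
    rw [hΦdef]
    refine h2.congr_deriv ?_
    ring
  have hΨd : ∀ t : ℝ, HasDerivAt Ψ
      (Complex.I * b + Av (w t) * (Complex.I * w t)) t := by
    intro t
    have h1 : HasDerivAt (fun s : ℝ => Complex.I * (b:ℂ) * (s:ℂ)) (Complex.I * b) t := by
      simpa using (hT t).const_mul (Complex.I * (b:ℂ))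
    have h2 := ((hasDerivAt_const t ((b:ℂ) * lr)).add h1).add (hkd t)
    rw [hΨdef]
    refine h2.congr_deriv ?_
    ring
  -- logarithmic derivatives of f and g
  have hfd : ∀ t : ℝ, deriv f t / f t
      = Complex.I * a + Au (w t) * (Complex.I * w t) := by
    intro t
    have hfeq : f = fun s => Complex.exp (Φ s) := funext hfΦ
    have hD : HasDerivAt f
        (Complex.exp (Φ t) * (Complex.I * a + Au (w t) * (Complex.I * w t))) t := by
      rw [hfeq]; exact (hΦd t).cexp
    rw [hD.deriv, hfΦ t]
    exact mul_div_cancel_left₀ _ (Complex.exp_ne_zero _)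
  have hgd : ∀ t : ℝ, deriv g t / g t
      = Complex.I * b + Av (w t) * (Complex.I * w t) := by
    intro t
    have hgeq : g = fun s => Complex.exp (Ψ s) := funext hgΨ
    have hD : HasDerivAt g
        (Complex.exp (Ψ t) * (Complex.I * b + Av (w t) * (Complex.I * w t))) t := by
      rw [hgeq]; exact (hΨd t).cexp
    rw [hD.deriv, hgΨ t]
    exact mul_div_cancel_left₀ _ (Complex.exp_ne_zero _)
  -- more continuity/integrability
  have hφ'c : Continuous (fun t : ℝ => Complex.I * a + Au (w t) * (Complex.I * w t)) :=
    continuous_const.add (hAuwc.mul (continuous_const.mul hwcont))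
  have hψ'c : Continuous (fun t : ℝ => Complex.I * b + Av (w t) * (Complex.I * w t)) :=
    continuous_const.add (hAvwc.mul (continuous_const.mul hwcont))
  -- Part 1 : m = a
  have h2πIne : (2 * (π:ℂ) * Complex.I) ≠ 0 := by
    simp [Real.pi_ne_zero, Complex.I_ne_zero]
  have hint1 : (∫ t in (0:ℝ)..(2 * π), deriv f t / f t) = Φ (2 * π) - Φ 0 := by
    simp only [hfd]
    exact intervalIntegral.integral_eq_sub_of_hasDerivAt (fun t _ => hΦd t)
      (hφ'c.intervalIntegrable _ _)
  have hΦval : Φ (2 * π) - Φ 0 = 2 * (π:ℂ) * Complex.I * a := by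
    rw [hΦdef]
    simp only [hw2π]
    push_cast
    ring
  have hma : (m:ℂ) = (a:ℂ) := by
    have := hm.symm.trans (hint1.trans hΦval)
    exact mul_left_cancel₀ h2πIne this
  have hmaz : m = a := by exact_mod_cast hma
  refine ⟨hmaz, ?_⟩
  -- Part 2
  have hΦc : Continuous Φ := by
    rw [hΦdef]
    exact (continuous_const.add ((continuous_const.mul Complex.continuous_ofReal))).add hLuwc
  obtain ⟨n, hn⟩ := db_branch_eq hLc hΦc (fun t ht => by rw [hL t ht, hfΦ t])
  set C : ℂ := (n:ℂ) * (2 * π * Complex.I) with hCdef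
  -- rewrite the integral
  have hIcongr : (∫ t in (0:ℝ)..(2 * π), L t * (deriv g t / g t))
      = ∫ t in (0:ℝ)..(2 * π),
          (Φ t + C) * (Complex.I * b + Av (w t) * (Complex.I * w t)) := by
    apply intervalIntegral.integral_congr
    intro t ht
    rw [Set.uIcc_of_le (by positivity)] at ht
    show L t * (deriv g t / g t) = (Φ t + C) * (Complex.I * b + Av (w t) * (Complex.I * w t))
    rw [hn t ht, hgd t]
  -- expand the integrand into six pieces
  have hexpand : ∀ t : ℝ,
      (Φ t + C) * (Complex.I * b + Av (w t) * (Complex.I * w t))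
      = ((a:ℂ) * lr + C) * (Complex.I * b)
        + (Complex.I * a * Complex.I * b) * (t:ℂ)
        + (Complex.I * b) * Lu (w t)
        + ((a:ℂ) * lr + C) * (Av (w t) * (Complex.I * w t))
        + (Complex.I * a) * ((t:ℂ) * (Av (w t) * (Complex.I * w t)))
        + Lu (w t) * Av (w t) * (Complex.I * w t) := by
    intro t
    rw [hΦdef]
    ring
  -- integrability of the pieces
  have hi1 : IntervalIntegrable (fun _ : ℝ => ((a:ℂ) * lr + C) * (Complex.I * b))
      MeasureTheory.volume 0 (2 * π) := intervalIntegrable_const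
  have hi2 : IntervalIntegrable
      (fun t : ℝ => (Complex.I * a * Complex.I * b) * (t:ℂ))
      MeasureTheory.volume 0 (2 * π) :=
    (continuous_const.mul Complex.continuous_ofReal).intervalIntegrable _ _
  have hi3 : IntervalIntegrable (fun t : ℝ => (Complex.I * b) * Lu (w t))
      MeasureTheory.volume 0 (2 * π) :=
    (continuous_const.mul hLuwc).intervalIntegrable _ _
  have hck' : Continuous (fun t : ℝ => Av (w t) * (Complex.I * w t)) :=
    hAvwc.mul (continuous_const.mul hwcont)
  have hi4 : IntervalIntegrable
      (fun t : ℝ => ((a:ℂ) * lr + C) * (Av (w t) * (Complex.I * w t)))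
      MeasureTheory.volume 0 (2 * π) :=
    (continuous_const.mul hck').intervalIntegrable _ _
  have hi5 : IntervalIntegrable
      (fun t : ℝ => (Complex.I * a) * ((t:ℂ) * (Av (w t) * (Complex.I * w t))))
      MeasureTheory.volume 0 (2 * π) :=
    (continuous_const.mul (Complex.continuous_ofReal.mul hck')).intervalIntegrable _ _
  have hi6 : IntervalIntegrable
      (fun t : ℝ => Lu (w t) * Av (w t) * (Complex.I * w t))
      MeasureTheory.volume 0 (2 * π) :=
    ((hLuwc.mul hAvwc).mul (continuous_const.mul hwcont)).intervalIntegrable _ _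
  -- values of the six integrals
  have hv1 : (∫ _ in (0:ℝ)..(2 * π), ((a:ℂ) * lr + C) * (Complex.I * b))
      = ((2 * π : ℝ) : ℂ) * (((a:ℂ) * lr + C) * (Complex.I * b)) := by
    rw [intervalIntegral.integral_const]
    simp [Complex.real_smul]
  have hv2 : (∫ t in (0:ℝ)..(2 * π), (Complex.I * a * Complex.I * b) * (t:ℂ))
      = (Complex.I * a * Complex.I * b) * (((2 * π) ^ 2 / 2 : ℝ) : ℂ) := by
    rw [intervalIntegral.integral_const_mul]
    congr 1
    rw [intervalIntegral.integral_ofReal]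
    norm_num [integral_id]
  have hLudiff : DifferentiableOn ℂ Lu (Metric.ball 0 r₁) :=
    fun z hz => ((hLud z hz).differentiableAt).differentiableWithinAt
  have hLvdiff : DifferentiableOn ℂ Lv (Metric.ball 0 r₁) :=
    fun z hz => ((hLvd z hz).differentiableAt).differentiableWithinAt
  have hv3 : (∫ t in (0:ℝ)..(2 * π), (Complex.I * b) * Lu (w t))
      = (Complex.I * b) * (2 * π * Lu 0) := by
    rw [intervalIntegral.integral_const_mul]
    congr 1
    exact db_circle_avg hr0 hrr₁ hLudiff
  have hintk' : (∫ t in (0:ℝ)..(2 * π), Av (w t) * (Complex.I * w t)) = 0 := by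
    have := intervalIntegral.integral_eq_sub_of_hasDerivAt (a := (0:ℝ)) (b := 2 * π)
      (f := fun s => Lv (w s)) (fun t _ => hkd t) (hck'.intervalIntegrable _ _)
    rw [this]
    simp [hw2π]
  have hv4 : (∫ t in (0:ℝ)..(2 * π),
        ((a:ℂ) * lr + C) * (Av (w t) * (Complex.I * w t))) = 0 := by
    rw [intervalIntegral.integral_const_mul, hintk', mul_zero]
  have hintk : (∫ t in (0:ℝ)..(2 * π), Lv (w t)) = 2 * π * Lv 0 :=
    db_circle_avg hr0 hrr₁ hLvdiff
  have hvTk' : (∫ t in (0:ℝ)..(2 * π), (t:ℂ) * (Av (w t) * (Complex.I * w t)))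
      = ((2 * π : ℝ) : ℂ) * Lv (w 0) - 2 * π * Lv 0 := by
    have hTkd : ∀ t : ℝ, HasDerivAt (fun s : ℝ => (s:ℂ) * Lv (w s))
        (Lv (w t) + (t:ℂ) * (Av (w t) * (Complex.I * w t))) t := by
      intro t
      have := (hT t).mul (hkd t)
      refine this.congr_deriv ?_
      ring
    have hftc := intervalIntegral.integral_eq_sub_of_hasDerivAt (a := (0:ℝ)) (b := 2 * π)
      (fun t _ => hTkd t)
      ((hLvwc.add (Complex.continuous_ofReal.mul hck')).intervalIntegrable _ _)
    rw [intervalIntegral.integral_add (f := fun t => Lv (w t))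
      (g := fun t => (t:ℂ) * (Av (w t) * (Complex.I * w t))) (hLvwc.intervalIntegrable _ _)
      ((Complex.continuous_ofReal.mul hck').intervalIntegrable _ _), hintk] at hftc
    simp only [hw2π] at hftc
    simp only [Complex.ofReal_zero, zero_mul, sub_zero] at hftc
    linear_combination hftc
  have hv5 : (∫ t in (0:ℝ)..(2 * π),
        (Complex.I * a) * ((t:ℂ) * (Av (w t) * (Complex.I * w t))))
      = (Complex.I * a) * (((2 * π : ℝ) : ℂ) * Lv (w 0) - 2 * π * Lv 0) := by
    rw [intervalIntegral.integral_const_mul, hvTk']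
  have hv6 : (∫ t in (0:ℝ)..(2 * π), Lu (w t) * Av (w t) * (Complex.I * w t)) = 0 := by
    have hdiff : DifferentiableOn ℂ (fun z => Lu z * Av z) (Metric.ball 0 r₁) :=
      hLudiff.mul (hAv.mono (ball_subset_ball hr₁R.le))
    have h6 := db_circle_zero hr0 hrr₁ hdiff
    rw [← h6]
    try apply intervalIntegral.integral_congr
    try intro t _
    try ring
  -- put everything together
  have hIval : (∫ t in (0:ℝ)..(2 * π), L t * (deriv g t / g t))
      = ((2 * π : ℝ) : ℂ) * (((a:ℂ) * lr + C) * (Complex.I * b))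
        + (Complex.I * a * Complex.I * b) * (((2 * π) ^ 2 / 2 : ℝ) : ℂ)
        + (Complex.I * b) * (2 * π * Lu 0)
        + 0
        + (Complex.I * a) * (((2 * π : ℝ) : ℂ) * Lv (w 0) - 2 * π * Lv 0)
        + 0 := by
    rw [hIcongr]
    rw [intervalIntegral.integral_congr (g := fun t =>
      ((a:ℂ) * lr + C) * (Complex.I * b)
        + (Complex.I * a * Complex.I * b) * (t:ℂ)
        + (Complex.I * b) * Lu (w t)
        + ((a:ℂ) * lr + C) * (Av (w t) * (Complex.I * w t))
        + (Complex.I * a) * ((t:ℂ) * (Av (w t) * (Complex.I * w t)))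
        + Lu (w t) * Av (w t) * (Complex.I * w t)) (fun t _ => hexpand t)]
    rw [intervalIntegral.integral_add ((((hi1.add hi2).add hi3).add hi4).add hi5) hi6,
      intervalIntegral.integral_add (((hi1.add hi2).add hi3).add hi4) hi5,
      intervalIntegral.integral_add ((hi1.add hi2).add hi3) hi4,
      intervalIntegral.integral_add (hi1.add hi2) hi3,
      intervalIntegral.integral_add hi1 hi2]
    rw [hv1, hv2, hv3, hv4, hv5, hv6]
  -- final computation
  have h0b : (0:ℂ) ∈ Metric.ball (0:ℂ) r₁ := mem_ball_self hr₁0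
  have hg0 : g 0 = Complex.exp ((b:ℂ) * lr + Lv (w 0)) := by
    rw [hgΨ 0, hΨdef]
    norm_num
  rw [hmaz, hIval, hg0]
  rw [← Complex.exp_int_mul _ (-a), ← Complex.exp_add]
  rw [show ((-1:ℂ)) = Complex.exp ((π:ℂ) * Complex.I) from Complex.exp_pi_mul_I.symm]
  rw [← hLue 0 h0b, ← hLve 0 h0b]
  rw [← Complex.exp_int_mul _ (a * b), ← Complex.exp_int_mul _ b,
    ← Complex.exp_int_mul _ (-a), ← Complex.exp_add, ← Complex.exp_add]
  rw [Complex.exp_eq_exp_iff_exists_int]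
  refine ⟨n * b, ?_⟩
  rw [hCdef]
  push_cast
  field_simp
  ring
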